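/- arXiv:1407.0399 — 3 statements merged into one kernel-verified Lean document; each statement's English description precedes it below -/
import Mathlib

section
/- Let n ≥ 1 and let λ : ℍ → ℝ be a nonzero ℝ-linear functional on the quaternions that vanishes on the real quaternions (equivalently, a nonzero real-linear functional on the purely imaginary quaternions Im ℍ). Define the ℝ-bilinear form B on ℍⁿ (regarded as a real vector space of dimension 4n) by B(u,v) = λ( Im( Σ_{j=1}^{n} u_j · conj(v_j) ) ), where Im(q) denotes the purely imaginary part of the quaternion q. Then B is alternating and nondegenerate. -/
open Quaternion

/-- For `n ≥ 1` and a nonzero ℝ-linear functional `λ` on the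
quaternions vanishing on the real quaternions, the ℝ-bilinear form
`B(u,v) = λ(Im(Σ_j u_j · conj(v_j)))` on `ℍⁿ` (viewed as a real vector space
of dimension `4n`) is alternating and nondegenerate. -/
theorem stmt7 (n : ℕ) (hn : 1 ≤ n)
    (lam : ℍ[ℝ] →ₗ[ℝ] ℝ) (hlam : lam ≠ 0)
    (hre : ∀ r : ℝ, lam (r : ℍ[ℝ]) = 0)
    (B : (Fin n → ℍ[ℝ]) → (Fin n → ℍ[ℝ]) → ℝ)
    (hB : ∀ u v, B u v = lam (Quaternion.im (∑ j : Fin n, u j * star (v j)))) :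
    -- ℝ-bilinear
    (∀ (c : ℝ) (u u' v), B (c • u + u') v = c * B u v + B u' v) ∧
    (∀ (c : ℝ) (u v v'), B u (c • v + v') = c * B u v + B u v') ∧
    -- alternating
    (∀ u, B u u = 0) ∧
    -- nondegenerate
    (∀ u, (∀ v, B u v = 0) → u = 0) := by
  -- lam applied to the imaginary part equals lam applied to the whole quaternion
  have lam_im : ∀ q : ℍ[ℝ], lam q.im = lam q := by
    intro q
    have h : lam q = lam ((q.re : ℍ[ℝ]) + q.im) := by rw [Quaternion.re_add_im]
    rw [map_add, hre] at h
    simpa using h.symm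
  have hB' : ∀ u v, B u v = lam (∑ j : Fin n, u j * star (v j)) := by
    intro u v; rw [hB, lam_im]
  refine ⟨?_, ?_, ?_, ?_⟩
  · intro c u u' v
    simp only [hB']
    rw [← smul_eq_mul, ← map_smul, ← map_add]
    congr 1
    rw [Finset.smul_sum, ← Finset.sum_add_distrib]
    apply Finset.sum_congr rfl
    intro j _
    simp [add_mul, smul_mul_assoc]
  · intro c u v v'
    simp only [hB']
    rw [← smul_eq_mul, ← map_smul, ← map_add]
    congr 1
    rw [Finset.smul_sum, ← Finset.sum_add_distrib]
    apply Finset.sum_congr rfl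
    intro j _
    simp [mul_add, mul_smul_comm]
  · intro u
    rw [hB']
    have : (∑ j : Fin n, u j * star (u j)) = ((∑ j : Fin n, normSq (u j) : ℝ) : ℍ[ℝ]) := by
      rw [Finset.sum_congr rfl fun j _ => Quaternion.self_mul_star (u j)]
      exact (map_sum (algebraMap ℝ ℍ[ℝ]) _ _).symm
    rw [this, hre]
  · intro u hu
    funext j
    by_contra hj
    -- for every q, lam (u j * star q) = 0
    have key : ∀ q : ℍ[ℝ], lam (u j * star q) = 0 := by
      intro q
      have := hu (Pi.single j q)
      rw [hB'] at this
      rwa [Finset.sum_eq_single j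
        (fun k _ hk => by simp [Pi.single_eq_of_ne hk])
        (fun h => absurd (Finset.mem_univ j) h), Pi.single_eq_same] at this
    -- then lam = 0, contradiction
    apply hlam
    ext p
    have := key (star ((u j)⁻¹ * p))
    rwa [star_star, ← mul_assoc, mul_inv_cancel₀ hj, one_mul] at this
  done
end

section
/- Let G be a locally compact Hausdorff topological group with a Haar measure μ that is both left-invariant and right-invariant, and let K be a compact subgroup of G. Suppose σ : G → G is a continuous group automorphism that preserves μ (μ(σ⁻¹(S)) = μ(S) for all Borel sets S) and satisfies: for every g ∈ G there exist k, k' ∈ K with σ(g) = k g⁻¹ k'. Then for all continuous compactly supported functions f, h : G → ℂ that are bi-K-invariant (f(k g k') = f(g) for all g ∈ G, k, k' ∈ K, and likewise for h), and for every x ∈ G, ∫_G f(y) h(y⁻¹ x) dμ(y) = ∫_G h(y) f(y⁻¹ x) dμ(y). In other words, convolution of bi-K-invariant functions is commutative, so (G,K) is a Gelfand pair. -/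
open MeasureTheory

/-- **Selberg.** Let `G` be a locally compact Hausdorff group with
a bi-invariant Haar measure `μ`, `K` a compact subgroup, and `σ` a continuous,
measure-preserving automorphism of `G` with `σ(g) ∈ K g⁻¹ K` for every `g`.
Then convolution of continuous compactly supported bi-`K`-invariant functions
is commutative: `(G,K)` is a Gelfand pair. -/
theorem stmt9 {G : Type*} [Group G] [TopologicalSpace G] [IsTopologicalGroup G]
    [LocallyCompactSpace G] [T2Space G] [MeasurableSpace G] [BorelSpace G]
    (μ : Measure G) [μ.IsHaarMeasure] [μ.IsMulRightInvariant]
    (K : Subgroup G) (hK : IsCompact (K : Set G))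
    (σ : G ≃* G) (hσc : Continuous σ)
    (hσμ : ∀ S : Set G, MeasurableSet S → μ (σ ⁻¹' S) = μ S)
    (hσ : ∀ g : G, ∃ k ∈ K, ∃ k' ∈ K, σ g = k * g⁻¹ * k')
    (f h : G → ℂ)
    (hfc : Continuous f) (hfs : HasCompactSupport f)
    (hhc : Continuous h) (hhs : HasCompactSupport h)
    (hfK : ∀ g : G, ∀ k ∈ K, ∀ k' ∈ K, f (k * g * k') = f g)
    (hhK : ∀ g : G, ∀ k ∈ K, ∀ k' ∈ K, h (k * g * k') = h g)
    (x : G) :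
    ∫ y, f y * h (y⁻¹ * x) ∂μ = ∫ y, h y * f (y⁻¹ * x) ∂μ := by
  -- σ is measure preserving
  have hmap : Measure.map σ μ = μ := by
    ext S hS
    rw [Measure.map_apply hσc.measurable hS, hσμ S hS]
  have comp : ∀ F : G → ℂ, Continuous F → ∫ y, F (σ y) ∂μ = ∫ y, F y ∂μ := by
    intro F hF
    calc ∫ y, F (σ y) ∂μ
        = ∫ y, F y ∂(Measure.map σ μ) :=
          (integral_map hσc.measurable.aemeasurable hF.aestronglyMeasurable).symm
      _ = ∫ y, F y ∂μ := by rw [hmap]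
  obtain ⟨k, hk, k', hk', hx⟩ := hσ x⁻¹
  calc ∫ y, f y * h (y⁻¹ * x) ∂μ
      = ∫ y, f (k * y) * h ((k * y)⁻¹ * (k * x⁻¹⁻¹ * k')) ∂μ := by
        congr 1; funext y
        have h1 : h ((k * y)⁻¹ * (k * x⁻¹⁻¹ * k')) = h (y⁻¹ * x) := by
          have := hhK (y⁻¹ * x) 1 (one_mem K) k' hk'
          simp only [one_mul] at this
          rw [← this]; congr 1; group
        rw [h1, hfK y k hk 1 (one_mem K) |>.symm]; simp
    _ = ∫ y, f y * h (y⁻¹ * (k * x⁻¹⁻¹ * k')) ∂μ :=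
        integral_mul_left_eq_self (fun y => f y * h (y⁻¹ * (k * x⁻¹⁻¹ * k'))) k
    _ = ∫ y, f y * h (y⁻¹ * σ x⁻¹) ∂μ := by rw [hx]
    _ = ∫ y, f (σ y) * h ((σ y)⁻¹ * σ x⁻¹) ∂μ := by
        refine (comp _ ?_).symm
        fun_prop
    _ = ∫ y, f y⁻¹ * h (x * y) ∂μ := by
        congr 1; funext y
        obtain ⟨a, ha, b, hb, hy⟩ := hσ y
        obtain ⟨c, hc, d, hd, hyx⟩ := hσ (y⁻¹ * x⁻¹)
        have e1 : f (σ y) = f y⁻¹ := by rw [hy]; exact hfK y⁻¹ a ha b hb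
        have e2 : (σ y)⁻¹ * σ x⁻¹ = σ (y⁻¹ * x⁻¹) := by
          simp [map_mul]
        have e3 : h (σ (y⁻¹ * x⁻¹)) = h (x * y) := by
          rw [hyx]
          have := hhK (x * y) c hc d hd
          rw [← this]; congr 1; group
        rw [e1, e2, e3]
    _ = ∫ y, f (x⁻¹ * y)⁻¹ * h (x * (x⁻¹ * y)) ∂μ :=
        (integral_mul_left_eq_self (fun y => f y⁻¹ * h (x * y)) x⁻¹).symm
    _ = ∫ y, h y * f (y⁻¹ * x) ∂μ := by
        congr 1; funext y
        rw [mul_inv_rev, inv_inv, mul_inv_cancel_left, mul_comm]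
end

section
/- Let n ≥ 1 and let G_n be the Heisenberg motion group: the set (ℂⁿ × ℝ) × U(n) with multiplication (z,t,k)(w,s,l) = (z + k·w, t + s + Im⟨z, k·w⟩, k l), where ⟨u,v⟩ = Σ_j u_j conj(v_j). Then: (i) this multiplication makes G_n a group with identity (0,0,I) and (z,t,k)⁻¹ = (−k⁻¹z, −t, k⁻¹); (ii) the map σ(z,t,k) = (conj(z), −t, conj(k)) (entrywise complex conjugation of the vector z and of the matrix k) is a group automorphism of G_n; and (iii) for every g = (z,t,k) ∈ G_n there exist u, v ∈ U(n) such that σ(g) = (0,0,u) · g⁻¹ · (0,0,v). Hence, with K = {(0,0,k) : k ∈ U(n)}, σ(g) ∈ K g⁻¹ K for all g ∈ G_n, i.e. (G_n, K) is a weakly symmetric pair. -/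
/-- The underlying set of the Heisenberg motion group `G_n = (ℂⁿ × ℝ) × U(n)`. -/
abbrev HMG (n : ℕ) : Type := ((Fin n → ℂ) × ℝ) × Matrix.unitaryGroup (Fin n) ℂ

open Matrix


/-- Sum form of the Hermitian pairing as a `dotProduct`. -/
lemma hmg_sum_eq {n : ℕ} (a b : Fin n → ℂ) :
    (∑ j, a j * (starRingEnd ℂ) (b j)) = a ⬝ᵥ star b := rfl

lemma hmg_unitary_dot {n : ℕ} (k : Matrix.unitaryGroup (Fin n) ℂ) (a b : Fin n → ℂ) :
    ((k : Matrix (Fin n) (Fin n) ℂ).mulVec a) ⬝ᵥ star ((k : Matrix (Fin n) (Fin n) ℂ).mulVec b)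
      = a ⬝ᵥ star b := by
  rw [dotProduct_comm, star_mulVec, ← dotProduct_mulVec, mulVec_mulVec,
    ← star_eq_conjTranspose, Matrix.UnitaryGroup.star_mul_self, one_mulVec, dotProduct_comm]

lemma hmg_im_self {n : ℕ} (z : Fin n → ℂ) : (z ⬝ᵥ star z).im = 0 := by
  rw [dotProduct, Complex.im_sum]
  exact Finset.sum_eq_zero fun j _ => by simp [Complex.mul_im]; ring

lemma hmg_star_dot {n : ℕ} (a b : Fin n → ℂ) : star a ⬝ᵥ b = star (a ⬝ᵥ star b) := by
  simp [dotProduct, star_sum, star_mul', Pi.star_apply]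

lemma hmg_map_star_mulVec {n : ℕ} (M : Matrix (Fin n) (Fin n) ℂ) (v : Fin n → ℂ) :
    (M.map (starRingEnd ℂ)).mulVec (star v) = star (M.mulVec v) := by
  funext j
  simp [Matrix.mulVec, dotProduct, star_sum, star_mul', Matrix.map_apply,
    Pi.star_apply, mul_comm]
lemma exists_unitary_mulVec {n : ℕ} (hn : 1 ≤ n) (a b : Fin n → ℂ)
    (h : a ⬝ᵥ star a = b ⬝ᵥ star b) :
    ∃ u : Matrix.unitaryGroup (Fin n) ℂ, (u : Matrix (Fin n) (Fin n) ℂ).mulVec a = b := by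
  classical
  set a' : EuclideanSpace ℂ (Fin n) := (WithLp.equiv 2 _).symm a with ha'
  set b' : EuclideanSpace ℂ (Fin n) := (WithLp.equiv 2 _).symm b with hb'
  have hinner : ∀ x : Fin n → ℂ,
      (inner ℂ ((WithLp.equiv 2 (Fin n → ℂ)).symm x) ((WithLp.equiv 2 (Fin n → ℂ)).symm x) : ℂ)
        = x ⬝ᵥ star x := by
    intro x
    exact EuclideanSpace.inner_toLp_toLp x x
  have hnorm : ‖a'‖ = ‖b'‖ := by
    have h1 : (inner ℂ a' a' : ℂ) = inner ℂ b' b' := by rw [ha', hb', hinner, hinner, h]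
    rw [inner_self_eq_norm_sq_to_K, inner_self_eq_norm_sq_to_K] at h1
    have h2 : (‖a'‖ : ℝ)^2 = (‖b'‖ : ℝ)^2 := by exact_mod_cast h1
    exact (sq_eq_sq₀ (norm_nonneg _) (norm_nonneg _)).mp h2
  by_cases ha0 : a' = 0
  · have hb0 : b' = 0 := norm_eq_zero.mp (by rw [← hnorm, ha0, norm_zero])
    have haz : a = 0 := by
      have := congrArg (WithLp.equiv 2 (Fin n → ℂ)) ha0; simpa [ha'] using this
    have hbz : b = 0 := by
      have := congrArg (WithLp.equiv 2 (Fin n → ℂ)) hb0; simpa [hb'] using this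
    exact ⟨1, by simp [haz, hbz]⟩
  · have hb0 : b' ≠ 0 := fun h0 => ha0 (norm_eq_zero.mp (by rw [hnorm, h0, norm_zero]))
    have hcard : Module.finrank ℂ (EuclideanSpace ℂ (Fin n)) = Fintype.card (Fin n) := by
      simp
    set i₀ : Fin n := ⟨0, hn⟩ with hi₀
    have hsingle : ∀ x' : EuclideanSpace ℂ (Fin n), x' ≠ 0 →
        Orthonormal ℂ (Set.restrict {i₀} (fun _ : Fin n => (‖x'‖ : ℂ)⁻¹ • x')) := by
      intro x' hx
      constructor
      · rintro ⟨i, hi⟩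
        show ‖(‖x'‖ : ℂ)⁻¹ • x'‖ = 1
        rw [norm_smul, norm_inv]
        simp [norm_ne_zero_iff.mpr hx]
      · rintro ⟨i, hi⟩ ⟨j, hj⟩ hij
        exact absurd (Subtype.ext ((Set.eq_of_mem_singleton hi).trans (Set.eq_of_mem_singleton hj).symm)) hij
    obtain ⟨B₁, hB₁⟩ := (hsingle a' ha0).exists_orthonormalBasis_extension_of_card_eq hcard
    obtain ⟨B₂, hB₂⟩ := (hsingle b' hb0).exists_orthonormalBasis_extension_of_card_eq hcard
    have hB₁0 : B₁ i₀ = (‖a'‖ : ℂ)⁻¹ • a' := hB₁ i₀ rfl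
    have hB₂0 : B₂ i₀ = (‖b'‖ : ℂ)⁻¹ • b' := hB₂ i₀ rfl
    set f : EuclideanSpace ℂ (Fin n) ≃ₗᵢ[ℂ] EuclideanSpace ℂ (Fin n) :=
      B₁.repr.trans B₂.repr.symm with hf
    have hfB : f (B₁ i₀) = B₂ i₀ := by
      simp [hf, B₁.repr_self, B₂.repr_symm_single]
    have hca : (‖a'‖ : ℂ) ≠ 0 := by
      simpa using norm_ne_zero_iff.mpr ha0
    have hfa : f a' = b' := by
      have h1 : a' = (‖a'‖ : ℂ) • B₁ i₀ := by
        rw [hB₁0, smul_inv_smul₀ hca]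
      rw [h1, f.map_smul, hfB, hB₂0, hnorm, smul_inv_smul₀]
      simpa [hnorm] using norm_ne_zero_iff.mpr hb0
    -- build the matrix
    set M : Matrix (Fin n) (Fin n) ℂ :=
      Matrix.toEuclideanLin.symm (f.toLinearEquiv : _ →ₗ[ℂ] _) with hM
    have hML : Matrix.toEuclideanLin M = (f.toLinearEquiv : _ →ₗ[ℂ] _) := by
      rw [hM, LinearEquiv.apply_symm_apply]
    have hMv : ∀ x : EuclideanSpace ℂ (Fin n),
        M.mulVec (WithLp.equiv 2 (Fin n → ℂ) x) = WithLp.equiv 2 (Fin n → ℂ) (f x) := by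
      intro x
      show M *ᵥ WithLp.ofLp x = WithLp.ofLp (f x)
      rw [← Matrix.ofLp_toEuclideanLin_apply, hML]
      rfl
    have hcol : ∀ i k : Fin n, M k i
        = (f (EuclideanSpace.single i 1) : EuclideanSpace ℂ (Fin n)) k := by
      intro i k
      have h1 := congrFun (hMv (EuclideanSpace.single i 1)) k
      rw [show WithLp.equiv 2 (Fin n → ℂ) (EuclideanSpace.single i 1) = Pi.single i 1 from rfl] at h1
      rw [Matrix.mulVec_single] at h1
      simpa using h1
    have hmem : M ∈ Matrix.unitaryGroup (Fin n) ℂ := by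
      rw [Matrix.mem_unitaryGroup_iff']
      ext i j
      have h2 : (star M * M) i j
          = ∑ k, (starRingEnd ℂ) (M k i) * M k j := by
        rw [Matrix.mul_apply]
        exact Finset.sum_congr rfl fun k _ => by rw [Matrix.star_apply]; rfl
      rw [h2]
      have h3 : ∑ k, (starRingEnd ℂ) (M k i) * M k j
          = (inner ℂ (f (EuclideanSpace.single i (1:ℂ))) (f (EuclideanSpace.single j 1)) : ℂ) := by
        rw [EuclideanSpace.inner_eq_star_dotProduct]
        simp only [dotProduct, Pi.star_apply, starRingEnd_apply]
        exact Finset.sum_congr rfl fun k _ => by rw [hcol i k, hcol j k]; exact mul_comm _ _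
      rw [h3, f.inner_map_map, EuclideanSpace.inner_single_left]
      simp [EuclideanSpace.single_apply, Matrix.one_apply, eq_comm]
    refine ⟨⟨M, hmem⟩, ?_⟩
    have h4 := hMv a'
    have h5 : WithLp.equiv 2 (Fin n → ℂ) a' = a := rfl
    rw [h5, hfa] at h4
    exact h4

/-- The Heisenberg motion group `G_n = (ℂⁿ × ℝ) × U(n)` with
`(z,t,k)(w,s,l) = (z + k·w, t + s + Im⟨z, k·w⟩, kl)` is a group with identity
`(0,0,I)` and `(z,t,k)⁻¹ = (−k⁻¹z, −t, k⁻¹)`; the map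
`σ(z,t,k) = (conj z, −t, conj k)` is a group automorphism of `G_n`; and for
every `g ∈ G_n` there are `u, v ∈ U(n)` with `σ(g) = (0,0,u)·g⁻¹·(0,0,v)`:
with `K = {(0,0,k)}`, `(G_n, K)` is a weakly symmetric pair. -/
theorem stmt12 (n : ℕ) (hn : 1 ≤ n)
    (mul : HMG n → HMG n → HMG n)
    (hmul : ∀ g g' : HMG n,
      mul g g' =
        ((g.1.1 + (g.2 : Matrix (Fin n) (Fin n) ℂ).mulVec g'.1.1,
          g.1.2 + g'.1.2 +
            (∑ j : Fin n, g.1.1 j *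
              (starRingEnd ℂ) ((g.2 : Matrix (Fin n) (Fin n) ℂ).mulVec g'.1.1 j)).im),
         g.2 * g'.2))
    (inv : HMG n → HMG n)
    (hinv : ∀ g : HMG n,
      inv g =
        ((-(((g.2⁻¹ : Matrix.unitaryGroup (Fin n) ℂ) :
              Matrix (Fin n) (Fin n) ℂ).mulVec g.1.1), -g.1.2), g.2⁻¹))
    (σ : HMG n → HMG n)
    (hσ1 : ∀ g : HMG n, (σ g).1.1 = fun j => (starRingEnd ℂ) (g.1.1 j))
    (hσ2 : ∀ g : HMG n, (σ g).1.2 = -g.1.2)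
    (hσ3 : ∀ g : HMG n, ((σ g).2 : Matrix (Fin n) (Fin n) ℂ)
      = ((g.2 : Matrix (Fin n) (Fin n) ℂ)).map (starRingEnd ℂ)) :
    -- (i) group structure
    (∀ g g' g'' : HMG n, mul (mul g g') g'' = mul g (mul g' g'')) ∧
    (∀ g : HMG n,
      mul (((0 : Fin n → ℂ), (0 : ℝ)), (1 : Matrix.unitaryGroup (Fin n) ℂ)) g = g) ∧
    (∀ g : HMG n,
      mul g (((0 : Fin n → ℂ), (0 : ℝ)), (1 : Matrix.unitaryGroup (Fin n) ℂ)) = g) ∧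
    (∀ g : HMG n,
      mul g (inv g) = (((0 : Fin n → ℂ), (0 : ℝ)), (1 : Matrix.unitaryGroup (Fin n) ℂ))) ∧
    (∀ g : HMG n,
      mul (inv g) g = (((0 : Fin n → ℂ), (0 : ℝ)), (1 : Matrix.unitaryGroup (Fin n) ℂ))) ∧
    -- (ii) `σ` is a group automorphism
    Function.Bijective σ ∧
    (∀ g g' : HMG n, σ (mul g g') = mul (σ g) (σ g')) ∧
    -- (iii) weak symmetry: `σ(g) ∈ K g⁻¹ K`
    (∀ g : HMG n, ∃ u v : Matrix.unitaryGroup (Fin n) ℂ,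
      σ g = mul (mul (((0 : Fin n → ℂ), (0 : ℝ)), u) (inv g))
                (((0 : Fin n → ℂ), (0 : ℝ)), v)) := by
  refine ⟨?_, ?_, ?_, ?_, ?_, ?_, ?_, ?_⟩
  · -- associativity
    intro g g' g''
    simp only [hmul, hmg_sum_eq, Matrix.UnitaryGroup.mul_val, Prod.mk.injEq]
    refine ⟨⟨?_, ?_⟩, mul_assoc _ _ _⟩
    · rw [mulVec_add, mulVec_mulVec, add_assoc]
    · simp only [← mulVec_mulVec, add_dotProduct, mulVec_add, star_add, dotProduct_add,
        hmg_unitary_dot, Complex.add_im]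
      ring
  · -- left identity
    intro g
    simp only [hmul, Matrix.UnitaryGroup.one_val, one_mulVec, hmg_sum_eq, zero_dotProduct,
      Complex.zero_im, zero_add, add_zero, one_mul]
  · -- right identity
    intro g
    simp only [hmul, hmg_sum_eq, mulVec_zero, star_zero, dotProduct_zero, add_zero,
      Complex.zero_im, mul_one]
  · -- right inverse
    intro g
    have hvec : (g.2 : Matrix (Fin n) (Fin n) ℂ).mulVec
        (((g.2⁻¹ : Matrix.unitaryGroup (Fin n) ℂ) : Matrix (Fin n) (Fin n) ℂ).mulVec g.1.1)
        = g.1.1 := by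
      rw [mulVec_mulVec, Matrix.UnitaryGroup.inv_val,
        Matrix.mem_unitaryGroup_iff.mp g.2.2, one_mulVec]
    simp only [hmul, hinv, hmg_sum_eq, mulVec_neg, hvec, dotProduct_neg, star_neg,
      Complex.neg_im, hmg_im_self, neg_zero, add_neg_cancel, zero_add, mul_inv_cancel]
  · -- left inverse
    intro g
    have hvec : ((g.2⁻¹ : Matrix.unitaryGroup (Fin n) ℂ) : Matrix (Fin n) (Fin n) ℂ).mulVec
        ((g.2 : Matrix (Fin n) (Fin n) ℂ).mulVec g.1.1) = g.1.1 := by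
      rw [mulVec_mulVec, Matrix.UnitaryGroup.inv_val,
        Matrix.mem_unitaryGroup_iff'.mp g.2.2, one_mulVec]
    simp only [hmul, hinv, hmg_sum_eq, hvec, neg_dotProduct, neg_add_cancel,
      Complex.neg_im, hmg_im_self, neg_zero, zero_add, add_zero, inv_mul_cancel]
  · -- σ bijective
    have hσσ : Function.Involutive σ := by
      intro g
      refine Prod.ext_iff.mpr ⟨Prod.ext_iff.mpr ⟨?_, ?_⟩, ?_⟩
      · rw [hσ1, hσ1]
        funext j
        simp
      · rw [hσ2, hσ2, neg_neg]
      · refine Subtype.ext ?_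
        rw [hσ3, hσ3, Matrix.map_map]
        ext i j
        simp [Matrix.map_apply]
    exact hσσ.bijective
  · -- σ homomorphism
    intro g g'
    simp only [hmul]
    refine Prod.ext_iff.mpr ⟨Prod.ext_iff.mpr ⟨?_, ?_⟩, ?_⟩
    · rw [hσ1, hσ1, hσ1, hσ3]
      funext j
      simp [Matrix.mulVec, dotProduct, Matrix.map_apply, map_sum, map_add, _root_.map_mul]
    · rw [hσ2, hσ2, hσ2, hσ1, hσ1, hσ3]
      simp only [hmg_sum_eq]
      have h1 : (fun j => (starRingEnd ℂ) (g.1.1 j)) = star g.1.1 := rfl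
      have h2 : (fun j => (starRingEnd ℂ) (g'.1.1 j)) = star g'.1.1 := rfl
      rw [h1, h2, hmg_map_star_mulVec, star_star, hmg_star_dot]
      simp only [Complex.star_def, Complex.conj_im]
      ring
    · refine Subtype.ext ?_
      rw [hσ3, Matrix.UnitaryGroup.mul_val, Matrix.UnitaryGroup.mul_val, hσ3, hσ3,
        _root_.Matrix.map_mul]
  · -- weak symmetry
    intro g
    have hdot : (((g.2⁻¹ : Matrix.unitaryGroup (Fin n) ℂ) :
          Matrix (Fin n) (Fin n) ℂ).mulVec g.1.1) ⬝ᵥ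
        star (((g.2⁻¹ : Matrix.unitaryGroup (Fin n) ℂ) :
          Matrix (Fin n) (Fin n) ℂ).mulVec g.1.1)
        = (-star g.1.1) ⬝ᵥ star (-star g.1.1) := by
      rw [hmg_unitary_dot g.2⁻¹, neg_dotProduct, star_neg, dotProduct_neg, neg_neg,
        star_star, hmg_star_dot]
      rw [Complex.star_def]
      exact (Complex.conj_eq_iff_im.mpr (hmg_im_self _)).symm
    obtain ⟨u, hu⟩ := exists_unitary_mulVec hn _ _ hdot
    refine ⟨u, (u * g.2⁻¹)⁻¹ * (σ g).2, ?_⟩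
    simp only [hmul, hinv]
    refine Prod.ext_iff.mpr ⟨Prod.ext_iff.mpr ⟨?_, ?_⟩, ?_⟩
    · rw [hσ1]
      rw [mulVec_zero, add_zero, zero_add, mulVec_neg, hu, neg_neg]
      rfl
    · rw [hσ2]
      simp only [hmg_sum_eq, zero_dotProduct, mulVec_zero, star_zero, dotProduct_zero,
        Complex.zero_im, add_zero, zero_add]
    · exact (mul_inv_cancel_left _ _).symm
end
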